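/- arXiv:1910.01615 — 3 statements merged into one kernel-verified Lean document; each statement's English description precedes it below -/
import Mathlib

section
/- If u_{ia} > 0 for all i and a, and z maximizes min_i Ū_i(z) over feasible allocations, then all normalized utilities are equal at z: Ū_i(z) = Ū_j(z) for all agents i, j. -/
def Feasible {n q : ℕ} (z : Fin n → Fin q → ℝ) : Prop :=
  (∀ i a, 0 ≤ z i a ∧ z i a ≤ 1) ∧ (∀ a, ∑ i, z i a = 1)

def util {n q : ℕ} (u : Fin n → Fin q → ℝ) (z : Fin n → Fin q → ℝ) (i : Fin n) : ℝ :=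
  ∑ a, u i a * z i a

noncomputable def nutil {n q : ℕ} (u : Fin n → Fin q → ℝ) (z : Fin n → Fin q → ℝ)
    (i : Fin n) : ℝ := util u z i / ∑ a, u i a

theorem egalitarian_equal_normalized_utilities {n q : ℕ} [NeZero n]
    (u : Fin n → Fin q → ℝ) (hu : ∀ i a, 0 < u i a)
    (z : Fin n → Fin q → ℝ) (hz : Feasible z)
    (hopt : ∀ z', Feasible z' →
        Finset.univ.inf' Finset.univ_nonempty (nutil u z') ≤
          Finset.univ.inf' Finset.univ_nonempty (nutil u z)) :
    ∀ i j, nutil u z i = nutil u z j := by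
  -- trivial case q = 0
  rcases Nat.eq_zero_or_pos q with hq | hq
  · subst hq
    intro i j
    simp [nutil, util]
  set m : ℝ := Finset.univ.inf' Finset.univ_nonempty (nutil u z) with hm
  suffices h : ∀ k, nutil u z k = m by
    intro i j; rw [h i, h j]
  intro k
  refine le_antisymm ?_ (Finset.inf'_le _ (Finset.mem_univ k))
  by_contra hk
  push_neg at hk
  -- hk : m < nutil u z k
  -- basic positivity facts
  have hW : ∀ i, 0 < ∑ a, u i a := fun i =>
    Finset.sum_pos (fun a _ => hu i a) (by simpa using Finset.univ_nonempty_iff.2 ⟨⟨0, hq⟩⟩)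
  have hzpos : ∀ i a, 0 ≤ z i a := fun i a => (hz.1 i a).1
  have hnon : ∀ i, 0 ≤ nutil u z i := fun i =>
    div_nonneg (Finset.sum_nonneg fun a _ => mul_nonneg (hu i a).le (hzpos i a)) (hW i).le
  have hm0 : 0 ≤ m := Finset.le_inf' _ _ fun i _ => hnon i
  have hnk : 0 < nutil u z k := lt_of_le_of_lt hm0 hk
  have hutilk : 0 < util u z k := by
    have := hnk
    rw [nutil] at this
    exact (div_pos_iff.mp this).resolve_right (fun h => absurd h.2 (not_lt.2 (hW k).le)) |>.1
  -- some good held by k in positive amount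
  have hex : ∃ a, 0 < z k a := by
    by_contra hno
    push_neg at hno
    have : util u z k = 0 := by
      rw [util]
      exact Finset.sum_eq_zero fun a _ => by
        have := le_antisymm (hno a) (hzpos k a); rw [this, mul_zero]
    linarith
  obtain ⟨a₀, ha₀⟩ := hex
  -- n ≥ 2 (if n = 1, k is the only agent so m = nutil k, contradiction)
  have hn2 : 2 ≤ n := by
    by_contra hn
    push_neg at hn
    have hbk : ∀ b : Fin n, b = k := fun b =>
      Fin.ext (by have := b.isLt; have := k.isLt; omega)
    have : m = nutil u z k := by
      refine le_antisymm (Finset.inf'_le _ (Finset.mem_univ k)) ?_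
      refine Finset.le_inf' _ _ fun b _ => ?_
      rw [hbk b]
    linarith
  have hn1R : (1 : ℝ) ≤ (n : ℝ) - 1 := by
    have : (2 : ℝ) ≤ (n : ℝ) := by exact_mod_cast hn2
    linarith
  have hn1pos : (0 : ℝ) < (n : ℝ) - 1 := by linarith
  -- choose ε
  set ε : ℝ := min (1/2) ((nutil u z k - m) / (2 * nutil u z k)) with hε
  have hεpos : 0 < ε := by
    apply lt_min (by norm_num)
    apply div_pos (by linarith) (by linarith)
  have hεhalf : ε ≤ 1/2 := min_le_left _ _
  have hε1 : ε < 1 := by linarith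
  have hεk : m < (1 - ε) * nutil u z k := by
    have h1 : ε ≤ (nutil u z k - m) / (2 * nutil u z k) := min_le_right _ _
    have h2 : ε * (2 * nutil u z k) ≤ nutil u z k - m := by
      rw [← le_div_iff₀ (by linarith)]; exact h1
    nlinarith
  set c : ℝ := ε / ((n : ℝ) - 1) with hc
  have hcpos : 0 < c := div_pos hεpos hn1pos
  have hc1 : c ≤ 1 := by
    rw [hc, div_le_one hn1pos]; linarith
  -- the perturbed allocation
  set z' : Fin n → Fin q → ℝ := fun i a => if i = k then (1 - ε) * z k a else z i a + c * z k a
    with hz'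
  have hz'k : ∀ a, z' k a = (1 - ε) * z k a := fun a => by simp [hz']
  have hz'i : ∀ i, i ≠ k → ∀ a, z' i a = z i a + c * z k a := fun i hi a => by simp [hz', hi]
  -- feasibility of z'
  have hfeas : Feasible z' := by
    constructor
    · intro i a
      by_cases hik : i = k
      · subst hik
        rw [hz'k]
        constructor
        · exact mul_nonneg (by linarith) (hzpos i a)
        · calc (1 - ε) * z i a ≤ 1 * z i a := by
                apply mul_le_mul_of_nonneg_right (by linarith) (hzpos i a)
          _ = z i a := one_mul _
          _ ≤ 1 := (hz.1 i a).2
      · rw [hz'i i hik]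
        constructor
        · exact add_nonneg (hzpos i a) (mul_nonneg hcpos.le (hzpos k a))
        · have hsum : z i a + z k a ≤ ∑ j, z j a := by
            have : ({i, k} : Finset (Fin n)) ⊆ Finset.univ := Finset.subset_univ _
            calc z i a + z k a = ∑ j ∈ ({i, k} : Finset (Fin n)), z j a := by
                  rw [Finset.sum_pair hik]
            _ ≤ ∑ j, z j a :=
                  Finset.sum_le_sum_of_subset_of_nonneg this fun j _ _ => hzpos j a
          have := hz.2 a
          have hck : c * z k a ≤ z k a := by
            calc c * z k a ≤ 1 * z k a := mul_le_mul_of_nonneg_right hc1 (hzpos k a)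
            _ = z k a := one_mul _
          linarith
    · intro a
      have hsplit : ∑ i, z' i a = z' k a + ∑ i ∈ Finset.univ.erase k, z' i a :=
        (Finset.add_sum_erase _ _ (Finset.mem_univ k)).symm
      have hsplit2 : ∑ i, z i a = z k a + ∑ i ∈ Finset.univ.erase k, z i a :=
        (Finset.add_sum_erase _ _ (Finset.mem_univ k)).symm
      have hcard : ((Finset.univ.erase k).card : ℝ) = (n : ℝ) - 1 := by
        rw [Finset.card_erase_of_mem (Finset.mem_univ k)]
        simp only [Finset.card_univ, Fintype.card_fin]
        rw [Nat.cast_sub (by omega)]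
        norm_num
      have heq : ∑ i ∈ Finset.univ.erase k, z' i a
          = (∑ i ∈ Finset.univ.erase k, z i a) + ((n : ℝ) - 1) * (c * z k a) := by
        rw [Finset.sum_congr rfl fun i hi => hz'i i (Finset.ne_of_mem_erase hi) a,
          Finset.sum_add_distrib, Finset.sum_const, nsmul_eq_mul, hcard]
      have hrw : ((n : ℝ) - 1) * (c * z k a) = ε * z k a := by
        rw [hc]; field_simp
      rw [hsplit, heq, hz'k, hrw]
      have := hz.2 a
      rw [hsplit2] at this
      linarith
  -- utilities under z'
  have hutil'k : nutil u z' k = (1 - ε) * nutil u z k := by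
    rw [nutil, nutil, util, util]
    rw [Finset.sum_congr rfl fun a _ => by rw [hz'k a]]
    rw [← mul_div_assoc]
    congr 1
    rw [Finset.mul_sum]
    exact Finset.sum_congr rfl fun a _ => by ring
  have hutil'i : ∀ i, i ≠ k → m < nutil u z' i := by
    intro i hik
    have hG : 0 < ∑ a, u i a * z k a := by
      have h1 : u i a₀ * z k a₀ ≤ ∑ a, u i a * z k a :=
        Finset.single_le_sum (fun a _ => mul_nonneg (hu i a).le (hzpos k a))
          (Finset.mem_univ a₀)
      nlinarith [hu i a₀]
    have : nutil u z' i = nutil u z i + c * (∑ a, u i a * z k a) / (∑ a, u i a) := by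
      rw [nutil, nutil, util, util]
      rw [Finset.sum_congr rfl fun a _ => by rw [hz'i i hik a]]
      rw [← add_div]
      congr 1
      rw [Finset.mul_sum, ← Finset.sum_add_distrib]
      exact Finset.sum_congr rfl fun a _ => by ring
    rw [this]
    have hmle : m ≤ nutil u z i := Finset.inf'_le _ (Finset.mem_univ i)
    have : 0 < c * (∑ a, u i a * z k a) / (∑ a, u i a) :=
      div_pos (mul_pos hcpos hG) (hW i)
    linarith
  -- all agents strictly above m under z', contradiction with optimality
  have hall : ∀ i, m < nutil u z' i := by
    intro i
    by_cases hik : i = k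
    · subst hik; rw [hutil'k]; exact hεk
    · exact hutil'i i hik
  have hlt : m < Finset.univ.inf' Finset.univ_nonempty (nutil u z') :=
    (Finset.lt_inf'_iff _).2 fun i _ => hall i
  have := hopt z' hfeas
  linarith
end

section
/- An allocation z maximizing the Nash product ∏_i U_i(z), where U_i(z) > 0 for all i, is envy-free: u_i · z_i ≥ u_i · z_j for all agents i, j, in the case of two agents. -/
lemma nash_key {q : ℕ} (u : Fin 2 → Fin q → ℝ)
    (hu : ∀ i a, 0 ≤ u i a)
    (z : Fin 2 → Fin q → ℝ) (hz : Feasible z)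
    (hpos : ∀ i, 0 < util u z i)
    (hopt : ∀ z', Feasible z' → ∏ i, util u z' i ≤ ∏ i, util u z i)
    (i j : Fin 2) (hij : j ≠ i)
    (hS : ∀ f : Fin 2 → ℝ, ∑ k, f k = f i + f j)
    (hP : ∀ f : Fin 2 → ℝ, ∏ k, f k = f i * f j) :
    ∑ a, u i a * z j a ≤ ∑ a, u i a * z i a := by
  by_contra h
  push_neg at h
  set A : ℝ := ∑ a, u i a * z i a with hAdef
  set B : ℝ := ∑ a, u i a * z j a with hBdef
  set D : ℝ := util u z j with hDdef
  have hA : 0 < A := hpos i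
  have hD : 0 < D := hpos j
  have hB : 0 < B := lt_trans hA h
  set s : ℝ := (B - A) / (2 * B) with hsdef
  have hs0 : 0 < s := by
    apply div_pos (by linarith) (by linarith)
  have hs1 : s < 1 := by
    rw [hsdef, div_lt_one (by linarith)]; linarith
  have hsB : s * (2 * B) = B - A := by
    rw [hsdef]; field_simp
  set z' : Fin 2 → Fin q → ℝ :=
    fun k a => if k = i then z i a + s * z j a else (1 - s) * z j a with hz'def
  have hz'i : ∀ a, z' i a = z i a + s * z j a := fun a => if_pos rfl
  have hz'j : ∀ a, z' j a = (1 - s) * z j a := fun a => if_neg hij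
  have hzsum : ∀ a, z i a + z j a = 1 := by
    intro a
    have := hz.2 a
    rwa [hS] at this
  have hfeas : Feasible z' := by
    constructor
    · intro k a
      by_cases hk : k = i
      · subst hk
        rw [hz'i]
        constructor
        · have := (hz.1 k a).1
          have := (hz.1 j a).1
          nlinarith
        · have h1 := (hz.1 k a).1
          have h2 := (hz.1 j a).1
          have h3 := hzsum a
          nlinarith
      · have hk' : z' k a = (1 - s) * z j a := if_neg hk
        rw [hk']
        have h1 := (hz.1 j a).1
        have h2 := (hz.1 j a).2
        constructor
        · nlinarith
        · nlinarith
    · intro a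
      rw [hS fun k => z' k a, hz'i, hz'j]
      have := hzsum a
      ring_nf
      nlinarith [hzsum a]
  have hui : util u z' i = A + s * B := by
    unfold util
    simp only [hz'i]
    rw [hAdef, hBdef, Finset.mul_sum]
    rw [← Finset.sum_add_distrib]
    apply Finset.sum_congr rfl
    intro a _
    ring
  have huj : util u z' j = (1 - s) * D := by
    unfold util
    simp only [hz'j]
    rw [hDdef]
    unfold util
    rw [Finset.mul_sum]
    apply Finset.sum_congr rfl
    intro a _
    ring
  have hopt' := hopt z' hfeas
  rw [hP (util u z'), hP (util u z), hui, huj] at hopt'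
  have hAi : util u z i = A := rfl
  rw [hAi] at hopt'
  -- (A + s*B) * ((1 - s) * D) ≤ A * D
  nlinarith [mul_pos hs0 hB, mul_pos hs0 hD, mul_pos (mul_pos hs0 hs0) (mul_pos hB hD)]

theorem nash_envy_free_two_agents {q : ℕ} (u : Fin 2 → Fin q → ℝ)
    (hu : ∀ i a, 0 ≤ u i a)
    (z : Fin 2 → Fin q → ℝ) (hz : Feasible z)
    (hpos : ∀ i, 0 < util u z i)
    (hopt : ∀ z', Feasible z' → ∏ i, util u z' i ≤ ∏ i, util u z i) :
    ∀ i j : Fin 2, ∑ a, u i a * z j a ≤ ∑ a, u i a * z i a := by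
  intro i j
  by_cases hij : i = j
  · subst hij; exact le_refl _
  · apply nash_key u hu z hz hpos hopt i j (Ne.symm hij)
    · intro f
      fin_cases i <;> fin_cases j <;>
        first
          | exact absurd rfl hij
          | (simp [Fin.sum_univ_two]; try ring)
    · intro f
      fin_cases i <;> fin_cases j <;>
        first
          | exact absurd rfl hij
          | (simp [Fin.prod_univ_two]; try ring)
end

section
/- Let z* be an allocation and i, h agents with weights w_i, w_h > 0 such that Ū_i(z*)/w_i = Ū_h(z*)/w_h (the weighted egalitarian condition), and suppose μ_i(z*), μ_h(z*) > 0. Then μ_i(z*)/w_i > μ_h(z*)/w_h if and only if ū_i(z*) < ū_h(z*). -/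
/-- Normalized utility of agent `i` in the rating model. -/
noncomputable def nutilR {n q : ℕ} (K : ℝ) (m : Fin q → ℝ) (r : Fin n → Fin q → ℝ)
    (z : Fin n → Fin q → ℝ) (i : Fin n) : ℝ :=
  (∑ a, K ^ (r i a - 3) * m a * z i a) / (∑ a, K ^ (r i a - 3) * m a)

/-- Market value of agent `i`'s bundle. -/
def mvalue {n q : ℕ} (m : Fin q → ℝ) (z : Fin n → Fin q → ℝ) (i : Fin n) : ℝ :=
  ∑ a, m a * z i a

/-- Average standardized utility of agent `i`'s bundle, given central ratings `ρ`. -/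
noncomputable def avgStd {n q : ℕ} (K : ℝ) (m : Fin q → ℝ) (r : Fin n → Fin q → ℝ)
    (ρ : Fin n → ℝ) (z : Fin n → Fin q → ℝ) (i : Fin n) : ℝ :=
  (∑ a, K ^ (r i a - ρ i) * m a * z i a) / mvalue m z i

theorem market_value_vs_avg_standardized_utility {n q : ℕ}
    (K : ℝ) (hK : 1 < K) (m : Fin q → ℝ) (hm : ∀ a, 0 < m a)
    (r : Fin n → Fin q → ℝ) (ρ : Fin n → ℝ)
    (hρ : ∀ i, ∑ a, K ^ (r i a - ρ i) * m a = ∑ a, m a)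
    (z : Fin n → Fin q → ℝ) (hz : ∀ i a, 0 ≤ z i a ∧ z i a ≤ 1)
    (w : Fin n → ℝ) (hw : ∀ i, 0 < w i)
    (i h : Fin n)
    (hμi : 0 < mvalue m z i) (hμh : 0 < mvalue m z h)
    (hegal : nutilR K m r z i / w i = nutilR K m r z h / w h) :
    mvalue m z i / w i > mvalue m z h / w h ↔
      avgStd K m r ρ z i < avgStd K m r ρ z h := by
  classical
  have hK0 : (0:ℝ) < K := lt_trans one_pos hK
  set M := ∑ a, m a with hM
  have hne : Nonempty (Fin q) := by
    rcases Nat.eq_zero_or_pos q with hq | hq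
    · exfalso; subst hq; simp [mvalue] at hμi
    · exact ⟨⟨0, hq⟩⟩
  have hMpos : 0 < M := Finset.sum_pos (fun a _ => hm a) Finset.univ_nonempty
  set S : Fin n → ℝ := fun j => ∑ a, K ^ (r j a - ρ j) * m a * z j a with hS
  have key : ∀ j, (∑ a, K ^ (r j a - 3) * m a * z j a) = K ^ (ρ j - 3) * S j := by
    intro j
    rw [hS, Finset.mul_sum]
    refine Finset.sum_congr rfl fun a _ => ?_
    rw [← mul_assoc, ← mul_assoc, ← Real.rpow_add hK0]
    ring_nf
  have keyd : ∀ j, (∑ a, K ^ (r j a - 3) * m a) = K ^ (ρ j - 3) * M := by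
    intro j
    rw [← hρ j, Finset.mul_sum]
    refine Finset.sum_congr rfl fun a _ => ?_
    rw [← mul_assoc, ← Real.rpow_add hK0]
    ring_nf
  have hKp : ∀ j, (0:ℝ) < K ^ (ρ j - 3) := fun j => Real.rpow_pos_of_pos hK0 _
  have hnut : ∀ j, nutilR K m r z j = S j / M := by
    intro j
    rw [nutilR, key j, keyd j, mul_div_mul_left _ _ (ne_of_gt (hKp j))]
  have hSpos : ∀ j, 0 < mvalue m z j → 0 < S j := by
    intro j hμ
    have hex : ∃ a : Fin q, 0 < m a * z j a := by
      by_contra hc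
      push_neg at hc
      have : mvalue m z j ≤ 0 := Finset.sum_nonpos fun a _ => hc a
      linarith
    obtain ⟨a, ha⟩ := hex
    refine Finset.sum_pos' (fun b _ => ?_) ⟨a, Finset.mem_univ a, ?_⟩
    · exact mul_nonneg (mul_nonneg (Real.rpow_pos_of_pos hK0 _).le (hm b).le) (hz j b).1
    · rw [mul_assoc]; exact mul_pos (Real.rpow_pos_of_pos hK0 _) ha
  have hSi := hSpos i hμi
  have hSh := hSpos h hμh
  have hegal' : S i * w h = S h * w i := by
    rw [hnut i, hnut h] at hegal
    field_simp [hMpos.ne', (hw i).ne', (hw h).ne'] at hegal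
    nlinarith [hMpos, hegal]
  rw [avgStd, avgStd, div_lt_div_iff₀ hμi hμh, gt_iff_lt,
    div_lt_div_iff₀ (hw h) (hw i)]
  show mvalue m z h * w i < mvalue m z i * w h ↔ S i * mvalue m z h < S h * mvalue m z i
  constructor
  · intro hlt
    have h1 : S i * (mvalue m z h * w i) < S i * (mvalue m z i * w h) :=
      (mul_lt_mul_iff_right₀ hSi).2 hlt
    have h2 : S i * (mvalue m z i * w h) = (S h * mvalue m z i) * w i := by
      nlinarith [hegal']
    nlinarith [hw i]
  · intro hlt
    have h1 : (S i * mvalue m z h) * w i < (S h * mvalue m z i) * w i :=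
      (mul_lt_mul_iff_left₀ (hw i)).2 hlt
    have h2 : (S h * mvalue m z i) * w i = S i * (mvalue m z i * w h) := by
      nlinarith [hegal']
    nlinarith [hSi]
end
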